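/- Under the setup of the straggler-resilient distributed k-median algorithm, let Ĉ be an optimal set of k-median centers for the weighted summary (Y, w), and let C* be an optimal set of k-median centers for P. Then cost(P, Ĉ) ≤ 3(1+δ) · cost(P, C*). -/

import Mathlib

open Finset

noncomputable def distToSet {d : ℕ} (p : EuclideanSpace ℝ (Fin d))
    (C : Finset (EuclideanSpace ℝ (Fin d))) : ℝ :=
  sInf ((fun c => dist p c) '' (C : Set (EuclideanSpace ℝ (Fin d))))

noncomputable def cost {d : ℕ} (P C : Finset (EuclideanSpace ℝ (Fin d))) : ℝ :=
  ∑ p ∈ P, distToSet p C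

/-- Weighted cost of the combined summary `Y = ∪_j Y_j` with cluster-size weights
scaled by the recovery coefficients `b`. -/
noncomputable def summaryCost {d : ℕ} {ι : Type*}
    [DecidableEq (EuclideanSpace ℝ (Fin d))]
    (R : Finset ι) (b : ι → ℝ)
    (Pl Y : ι → Finset (EuclideanSpace ℝ (Fin d)))
    (cl : ι → EuclideanSpace ℝ (Fin d) → EuclideanSpace ℝ (Fin d))
    (C : Finset (EuclideanSpace ℝ (Fin d))) : ℝ :=
  ∑ j ∈ R, b j * ∑ y ∈ Y j,
    (((Pl j).filter (fun x => cl j x = y)).card : ℝ) * distToSet y C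

lemma distToSet_nonneg {d : ℕ} (p : EuclideanSpace ℝ (Fin d))
    (C : Finset (EuclideanSpace ℝ (Fin d))) : 0 ≤ distToSet p C := by
  apply Real.sInf_nonneg
  rintro x ⟨c, _, rfl⟩
  exact dist_nonneg

lemma distToSet_le {d : ℕ} (p : EuclideanSpace ℝ (Fin d))
    {C : Finset (EuclideanSpace ℝ (Fin d))} {c : EuclideanSpace ℝ (Fin d)}
    (hc : c ∈ C) : distToSet p C ≤ dist p c :=
  csInf_le ⟨0, by rintro x ⟨c', _, rfl⟩; exact dist_nonneg⟩ ⟨c, hc, rfl⟩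

lemma distToSet_exists {d : ℕ} {C : Finset (EuclideanSpace ℝ (Fin d))}
    (hC : C.Nonempty) (p : EuclideanSpace ℝ (Fin d)) :
    ∃ c ∈ C, distToSet p C = dist p c := by
  obtain ⟨c, hc, hmin⟩ := C.exists_min_image (fun c => dist p c) hC
  refine ⟨c, hc, le_antisymm (distToSet_le p hc) ?_⟩
  refine le_csInf ⟨dist p c, c, hc, rfl⟩ ?_
  rintro x ⟨c', hc', rfl⟩
  exact hmin c' hc'

lemma distToSet_triangle {d : ℕ} {C : Finset (EuclideanSpace ℝ (Fin d))}
    (hC : C.Nonempty) (x y : EuclideanSpace ℝ (Fin d)) :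
    distToSet x C ≤ dist x y + distToSet y C := by
  obtain ⟨c, hc, hyc⟩ := distToSet_exists hC y
  calc distToSet x C ≤ dist x c := distToSet_le x hc
    _ ≤ dist x y + dist y c := dist_triangle x y c
    _ = dist x y + distToSet y C := by rw [hyc]

/-- Theorem 3: the straggler-resilient distributed `k`-median algorithm returns a
`3(1+δ)`-approximate solution. -/
theorem distributed_kmedian_approx {d k : ℕ} {ι : Type*} [DecidableEq ι]
    [DecidableEq (EuclideanSpace ℝ (Fin d))]
    (P : Finset (EuclideanSpace ℝ (Fin d)))
    (R : Finset ι) (Pl : ι → Finset (EuclideanSpace ℝ (Fin d)))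
    (hPl : ∀ j ∈ R, Pl j ⊆ P)
    (b : ι → ℝ) (δ : ℝ) (hδ : 0 < δ)
    (hb : ∀ j ∈ R, 0 ≤ b j)
    (hcov : ∀ p ∈ P,
      1 ≤ ∑ j ∈ R.filter (fun j => p ∈ Pl j), b j ∧
      ∑ j ∈ R.filter (fun j => p ∈ Pl j), b j ≤ 1 + δ)
    (Y : ι → Finset (EuclideanSpace ℝ (Fin d)))
    (hYk : ∀ j ∈ R, (Y j).card = k ∧ (Y j).Nonempty)
    (hYopt : ∀ j ∈ R, ∀ C' : Finset (EuclideanSpace ℝ (Fin d)),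
      C'.card = k → C'.Nonempty → cost (Pl j) (Y j) ≤ cost (Pl j) C')
    (cl : ι → EuclideanSpace ℝ (Fin d) → EuclideanSpace ℝ (Fin d))
    (hcl : ∀ j ∈ R, ∀ x ∈ Pl j,
      cl j x ∈ Y j ∧ dist x (cl j x) = distToSet x (Y j))
    -- Ĉ : optimal k-median centers for the weighted summary (Y, w)
    (Chat : Finset (EuclideanSpace ℝ (Fin d)))
    (hChatk : Chat.card = k) (hChatne : Chat.Nonempty)
    (hChatopt : ∀ C' : Finset (EuclideanSpace ℝ (Fin d)),
      C'.card = k → C'.Nonempty →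
      summaryCost R b Pl Y cl Chat ≤ summaryCost R b Pl Y cl C')
    -- C* : optimal k-median centers for P
    (Cstar : Finset (EuclideanSpace ℝ (Fin d)))
    (hCstark : Cstar.card = k) (hCstarne : Cstar.Nonempty)
    (hCstaropt : ∀ C' : Finset (EuclideanSpace ℝ (Fin d)),
      C'.card = k → C'.Nonempty → cost P Cstar ≤ cost P C') :
    cost P Chat ≤ 3 * (1 + δ) * cost P Cstar := by
  classical
  -- Regroup the summary cost as a sum over points of the local datasets.
  have hsum : ∀ C : Finset (EuclideanSpace ℝ (Fin d)),
      summaryCost R b Pl Y cl C = ∑ j ∈ R, b j * ∑ x ∈ Pl j, distToSet (cl j x) C := by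
    intro C
    unfold summaryCost
    refine Finset.sum_congr rfl fun j hj => ?_
    congr 1
    have h1 : ∀ y ∈ Y j, (((Pl j).filter (fun x => cl j x = y)).card : ℝ) * distToSet y C
        = ∑ x ∈ (Pl j).filter (fun x => cl j x = y), distToSet (cl j x) C := by
      intro y hy
      rw [Finset.sum_congr rfl (fun x hx => by rw [(Finset.mem_filter.mp hx).2]),
        Finset.sum_const, nsmul_eq_mul]
    rw [Finset.sum_congr rfl h1,
      Finset.sum_fiberwise_of_maps_to (fun x hx => (hcl j hj x hx).1)]
  -- Swap the order of summation.
  have hswap : ∀ g : EuclideanSpace ℝ (Fin d) → ℝ,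
      (∑ j ∈ R, b j * ∑ x ∈ Pl j, g x)
      = ∑ p ∈ P, (∑ j ∈ R.filter (fun j => p ∈ Pl j), b j) * g p := by
    intro g
    have h1 : ∀ j ∈ R, b j * ∑ x ∈ Pl j, g x
        = ∑ p ∈ P, if p ∈ Pl j then b j * g p else 0 := by
      intro j hj
      rw [Finset.mul_sum, ← Finset.sum_filter, Finset.filter_mem_eq_inter,
        Finset.inter_eq_right.mpr (hPl j hj)]
    calc ∑ j ∈ R, b j * ∑ x ∈ Pl j, g x
        = ∑ j ∈ R, ∑ p ∈ P, if p ∈ Pl j then b j * g p else 0 :=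
          Finset.sum_congr rfl h1
      _ = ∑ p ∈ P, ∑ j ∈ R, if p ∈ Pl j then b j * g p else 0 := Finset.sum_comm
      _ = ∑ p ∈ P, (∑ j ∈ R.filter (fun j => p ∈ Pl j), b j) * g p := by
          refine Finset.sum_congr rfl fun p hp => ?_
          rw [Finset.sum_mul, Finset.sum_filter]
  set A := ∑ j ∈ R, b j * cost (Pl j) (Y j) with hA
  set S := ∑ j ∈ R, b j * cost (Pl j) Cstar with hSdef
  -- cost (Pl j) (Y j) as a sum of distances to cluster centers
  have hcostY : ∀ j ∈ R, cost (Pl j) (Y j) = ∑ x ∈ Pl j, dist x (cl j x) := by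
    intro j hj
    exact Finset.sum_congr rfl fun x hx => ((hcl j hj x hx).2).symm
  -- A ≤ S
  have hAS : A ≤ S := by
    refine Finset.sum_le_sum fun j hj => ?_
    exact mul_le_mul_of_nonneg_left (hYopt j hj Cstar hCstark hCstarne) (hb j hj)
  -- S ≤ (1+δ) cost P Cstar
  have hS : S ≤ (1 + δ) * cost P Cstar := by
    have : S = ∑ p ∈ P, (∑ j ∈ R.filter (fun j => p ∈ Pl j), b j) * distToSet p Cstar :=
      hswap (fun p => distToSet p Cstar)
    rw [this, cost, Finset.mul_sum]
    refine Finset.sum_le_sum fun p hp => ?_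
    exact mul_le_mul_of_nonneg_right ((hcov p hp).2) (distToSet_nonneg p Cstar)
  -- cost P Chat ≤ ∑_j b_j ∑_{x ∈ Pl j} distToSet x Chat
  have h1 : cost P Chat ≤ ∑ j ∈ R, b j * ∑ x ∈ Pl j, distToSet x Chat := by
    rw [hswap (fun p => distToSet p Chat), cost]
    refine Finset.sum_le_sum fun p hp => ?_
    calc distToSet p Chat = 1 * distToSet p Chat := (one_mul _).symm
      _ ≤ (∑ j ∈ R.filter (fun j => p ∈ Pl j), b j) * distToSet p Chat :=
        mul_le_mul_of_nonneg_right ((hcov p hp).1) (distToSet_nonneg p Chat)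
  -- triangle step for Chat
  have h2 : (∑ j ∈ R, b j * ∑ x ∈ Pl j, distToSet x Chat)
      ≤ A + summaryCost R b Pl Y cl Chat := by
    rw [hsum Chat, hA, ← Finset.sum_add_distrib]
    refine Finset.sum_le_sum fun j hj => ?_
    rw [← mul_add, hcostY j hj, ← Finset.sum_add_distrib]
    refine mul_le_mul_of_nonneg_left (Finset.sum_le_sum fun x hx => ?_) (hb j hj)
    exact distToSet_triangle hChatne x (cl j x)
  have h3 : summaryCost R b Pl Y cl Chat ≤ summaryCost R b Pl Y cl Cstar :=
    hChatopt Cstar hCstark hCstarne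
  -- triangle step for Cstar
  have h4 : summaryCost R b Pl Y cl Cstar ≤ A + S := by
    rw [hsum Cstar, hA, hSdef, ← Finset.sum_add_distrib]
    refine Finset.sum_le_sum fun j hj => ?_
    rw [← mul_add, hcostY j hj, cost, ← Finset.sum_add_distrib]
    refine mul_le_mul_of_nonneg_left (Finset.sum_le_sum fun x hx => ?_) (hb j hj)
    calc distToSet (cl j x) Cstar ≤ dist (cl j x) x + distToSet x Cstar :=
        distToSet_triangle hCstarne (cl j x) x
      _ = dist x (cl j x) + distToSet x Cstar := by rw [dist_comm]
  linarith
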